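/- Let D : [0,∞) → Prop and t ∈ [0,∞). If D t holds and there exists r ∈ [0, t) with ¬D r, then there exists t′ ∈ [0, t] satisfying the blame conditions for D at t. (Whenever the situation is dangerous at time t but was not always dangerous before t, a finite blame time exists.) -/

import Mathlib

open scoped NNReal

/-- `t'` satisfies the blame conditions for the predicate `D : [0,∞) → Prop` at time `t`:
`t' ≤ t`, `D r` holds for every `r ∈ (t', t]`, and for every `t'' ∈ [0, t')`
there exists `r' ∈ (t'', t']` with `¬ D r'`. -/
def BlameCond (D : ℝ≥0 → Prop) (t t' : ℝ≥0) : Prop :=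
  t' ≤ t ∧ (∀ r ∈ Set.Ioc t' t, D r) ∧
    ∀ t'' ∈ Set.Ico (0 : ℝ≥0) t', ∃ r' ∈ Set.Ioc t'' t', ¬ D r'

/-- if the situation is dangerous at time `t` but was not always dangerous
before `t`, then a (finite) blame time exists. -/
theorem blame_time_exists (D : ℝ≥0 → Prop) (t : ℝ≥0)
    (hDt : D t) (hnot : ∃ r ∈ Set.Ico (0 : ℝ≥0) t, ¬ D r) :
    ∃ t' ∈ Set.Icc (0 : ℝ≥0) t, BlameCond D t t' := by
  classical
  obtain ⟨r, hr, hDr⟩ := hnot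
  set S : Set ℝ≥0 := {s | s ≤ t ∧ ¬ D s} with hS
  have hne : S.Nonempty := ⟨r, hr.2.le, hDr⟩
  have hbdd : BddAbove S := ⟨t, fun s hs => hs.1⟩
  set t' := sSup S with ht'
  have ht'le : t' ≤ t := csSup_le hne fun s hs => hs.1
  refine ⟨t', ⟨zero_le, ht'le⟩, ht'le, ?_, ?_⟩
  · intro x hx
    by_contra hDx
    exact absurd (le_csSup hbdd ⟨hx.2, hDx⟩) (not_le.mpr hx.1)
  · intro t'' ht''
    obtain ⟨s, hs, hts⟩ := exists_lt_of_lt_csSup hne ht''.2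
    exact ⟨s, ⟨hts, le_csSup hbdd hs⟩, hs.2⟩
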